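/- Let λ:[0,1]→ℝ be continuous and γ:[0,1]→ℝ be nondecreasing, càdlàg and continuous at 0. If Z:[0,1]→ℝ² is a solution of the reflected equation dZ = AZ dλ − e₁ dγ + e₁ dK on the interval (0,1] and Z is continuous at 0, then Z is a solution on the whole interval [0,1]. -/

import Mathlib

open MeasureTheory Set Real Filter Topology ProbabilityTheory

noncomputable section

/-- `exp(δA)` applied to a vector `v ∈ ℝ²`, where `A = [[0,1],[1,0]]`. -/
def expA (d : ℝ) (v : ℝ × ℝ) : ℝ × ℝ :=
  (Real.cosh d * v.1 + Real.sinh d * v.2, Real.sinh d * v.1 + Real.cosh d * v.2)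

/-- `(Z, K)` is a solution of the reflected equation `dZ = A Z dλ - e₁ dγ + e₁ dK` on `I`:
`Z·e₁ ≥ 0` on `I`, the Stieltjes measure `dK` is carried by `{t ∈ I | Z t · e₁ = 0}`, and
for `s ≤ t` in `I`, `Z t = e^{A(λ_t-λ_s)} Z s + ∫_s^t e^{A(λ_t-λ_u)} e₁ (dK u - dγ u)`. -/
def IsSolutionPair (lam : ℝ → ℝ) (gam K : StieltjesFunction ℝ) (I : Set ℝ)
    (Z : ℝ → ℝ × ℝ) : Prop :=
  (∀ t ∈ I, 0 ≤ (Z t).1) ∧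
  K.measure {t ∈ I | (Z t).1 ≠ 0} = 0 ∧
  ∀ s ∈ I, ∀ t ∈ I, s ≤ t →
    Z t = expA (lam t - lam s) (Z s)
      + (∫ u in Set.Ioc s t, expA (lam t - lam u) (1, 0) ∂K.measure)
      - (∫ u in Set.Ioc s t, expA (lam t - lam u) (1, 0) ∂gam.measure)

/-- `Z` is a solution of the reflected equation on `I` (for some reflection term `K`). -/
def IsSolution (lam : ℝ → ℝ) (gam : StieltjesFunction ℝ) (I : Set ℝ)
    (Z : ℝ → ℝ × ℝ) : Prop :=
  ∃ K : StieltjesFunction ℝ, IsSolutionPair lam gam K I Z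

lemma continuous_expA : Continuous (fun p : ℝ × (ℝ × ℝ) => expA p.1 p.2) := by
  unfold expA
  fun_prop

lemma expA_zero (v : ℝ × ℝ) : expA 0 v = v := by
  simp [expA]

/-- The Stieltjes function `x ↦ K (max x 0)`, which kills any mass of `K` on `(-∞, 0]`. -/
def posPart (K : StieltjesFunction ℝ) : StieltjesFunction ℝ where
  toFun x := K (max x 0)
  mono' := K.mono.comp fun _ _ h => max_le_max h le_rfl
  right_continuous' x := by
    have h1 : ContinuousWithinAt K (Set.Ici (max x 0)) (max x 0) := K.right_continuous _
    have h2 : ContinuousWithinAt (fun y : ℝ => max y 0) (Set.Ici x) x :=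
      (continuous_id.max continuous_const).continuousWithinAt
    exact ContinuousWithinAt.comp (g := fun y : ℝ => K y) (f := fun y : ℝ => max y 0)
      h1 h2 fun y (hy : x ≤ y) => max_le_max hy le_rfl

lemma posPart_apply (K : StieltjesFunction ℝ) (x : ℝ) : posPart K x = K (max x 0) := rfl

lemma posPart_measure (K : StieltjesFunction ℝ) :
    (posPart K).measure = K.measure.restrict (Set.Ioi 0) := by
  refine MeasureTheory.Measure.ext_of_Ioc' _ _ (fun a b _ => ?_) (fun a b hab => ?_)
  · rw [StieltjesFunction.measure_Ioc]
    exact ENNReal.ofReal_ne_top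
  · rw [StieltjesFunction.measure_Ioc,
      Measure.restrict_apply measurableSet_Ioc, Set.Ioc_inter_Ioi,
      StieltjesFunction.measure_Ioc, posPart_apply, posPart_apply]
    rcases le_or_gt b 0 with hb | hb
    · have ha : max a 0 = 0 := max_eq_right (hab.le.trans hb)
      have hb' : max b 0 = 0 := max_eq_right hb
      rw [ha, hb']
      have h1 : K b - K 0 ≤ 0 := sub_nonpos.2 (K.mono hb)
      rw [sub_self, ENNReal.ofReal_zero, eq_comm, ENNReal.ofReal_eq_zero]
      exact h1
    · rw [max_eq_left hb.le]

theorem posPart_measure_le (K : StieltjesFunction ℝ) (s : Set ℝ) :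
    (posPart K).measure s ≤ K.measure s := by
  rw [posPart_measure]
  exact Measure.restrict_le_self s

set_option maxHeartbeats 2000000 in
/-- **Lemma 1.** If `Z` solves the reflected equation on `(0,1]` and is continuous at `0`
(within `[0,1]`), and `γ` is continuous at `0`, then `Z` solves the equation on `[0,1]`. -/
theorem solution_extends_to_zero (lam : ℝ → ℝ) (hlam : ContinuousOn lam (Set.Icc 0 1))
    (gam : StieltjesFunction ℝ) (hgam : ContinuousAt gam 0)
    (Z : ℝ → ℝ × ℝ) (hZ : IsSolution lam gam (Set.Ioc 0 1) Z)
    (hZcont : Tendsto Z (nhdsWithin 0 (Set.Icc 0 1)) (𝓝 (Z 0))) :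
    IsSolution lam gam (Set.Icc 0 1) Z := by
  obtain ⟨K, hpos, hnull, heq⟩ := hZ
  have hsub : Set.Ioc (0:ℝ) 1 ⊆ Set.Icc 0 1 := Set.Ioc_subset_Icc_self
  have hfle : 𝓝[Set.Ioc (0:ℝ) 1] (0:ℝ) ≤ 𝓝[Set.Icc (0:ℝ) 1] 0 := nhdsWithin_mono _ hsub
  haveI hne : (𝓝[Set.Ioc (0:ℝ) 1] (0:ℝ)).NeBot := left_nhdsWithin_Ioc_neBot one_pos
  have hZ0 : Tendsto Z (𝓝[Set.Ioc (0:ℝ) 1] 0) (𝓝 (Z 0)) := hZcont.mono_left hfle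
  have hmemIoc : ∀ᶠ ε in 𝓝[Set.Ioc (0:ℝ) 1] 0, ε ∈ Set.Ioc (0:ℝ) 1 :=
    eventually_mem_nhdsWithin
  -- the `posPart K` integral agrees with the `K` integral over `Ioc s t` with `s ≥ 0`
  have hKint : ∀ (g : ℝ → ℝ × ℝ) (s' t' : ℝ), 0 ≤ s' →
      (∫ u in Set.Ioc s' t', g u ∂(posPart K).measure)
        = ∫ u in Set.Ioc s' t', g u ∂K.measure := by
    intro g s' t' hs'
    rw [posPart_measure, Measure.restrict_restrict measurableSet_Ioc]
    rw [Set.inter_eq_left.mpr ((Set.Ioc_subset_Ioc_left hs').trans Set.Ioc_subset_Ioi_self)]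
  refine ⟨posPart K, ?_, ?_, ?_⟩
  · -- nonnegativity, including at `0` by passing to the limit
    intro t ht
    rcases eq_or_lt_of_le ht.1 with h0 | h0
    · rw [← h0]
      have h1 : Tendsto (fun ε => (Z ε).1) (𝓝[Set.Ioc (0:ℝ) 1] 0) (𝓝 (Z 0).1) :=
        (continuous_fst.tendsto _).comp hZ0
      refine ge_of_tendsto h1 ?_
      filter_upwards [hmemIoc] with ε hε using hpos ε hε
    · exact hpos t ⟨h0, ht.2⟩
  · -- the measure `d(posPart K)` is carried by the zero set
    refine le_antisymm (le_trans ?_ hnull.le) zero_le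
    rw [posPart_measure, Measure.restrict_apply']
    · refine measure_mono ?_
      rintro x ⟨⟨hx1, hx0⟩, hxpos⟩
      exact ⟨⟨hxpos, hx1.2⟩, hx0⟩
    · exact measurableSet_Ioi
  · -- the integral equation
    intro s hs t ht hst
    rcases eq_or_lt_of_le hs.1 with h0 | h0
    · -- s = 0
      rw [← h0] at hst ⊢
      rcases eq_or_lt_of_le hst with ht0 | ht0
      · -- t = 0
        rw [← ht0]
        simp [expA_zero]
      · -- t > 0 : pass to the limit in the equation on `[ε, t]` as `ε → 0⁺`
        set f : ℝ → ℝ × ℝ := fun u => expA (lam t - lam u) (1, 0) with hf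
        have hfc : ContinuousOn f (Set.Icc 0 1) := by
          have : ContinuousOn (fun u => lam t - lam u) (Set.Icc (0:ℝ) 1) :=
            continuousOn_const.sub hlam
          have hch : ContinuousOn (fun u => Real.cosh (lam t - lam u)) (Set.Icc (0:ℝ) 1) :=
            Real.continuous_cosh.comp_continuousOn this
          have hsh : ContinuousOn (fun u => Real.sinh (lam t - lam u)) (Set.Icc (0:ℝ) 1) :=
            Real.continuous_sinh.comp_continuousOn this
          rw [hf]
          simp only [expA]
          exact ((hch.mul continuousOn_const).add (hsh.mul continuousOn_const)).prodMk
            ((hsh.mul continuousOn_const).add (hch.mul continuousOn_const))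
        obtain ⟨C, hC⟩ : ∃ C, ∀ u ∈ Set.Icc (0:ℝ) 1, ‖f u‖ ≤ C :=
          isCompact_Icc.exists_bound_of_continuousOn hfc
        have hC0 : 0 ≤ C := le_trans (norm_nonneg _) (hC 0 (by constructor <;> norm_num))
        -- integrability over `Icc 0 t`
        have hIccsub : Set.Icc (0:ℝ) t ⊆ Set.Icc 0 1 := Set.Icc_subset_Icc le_rfl ht.2
        have hKi : IntegrableOn f (Set.Icc 0 t) K.measure :=
          (hfc.mono hIccsub).integrableOn_compact isCompact_Icc
        have hgi : IntegrableOn f (Set.Icc 0 t) gam.measure :=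
          (hfc.mono hIccsub).integrableOn_compact isCompact_Icc
        -- splitting of integrals
        have hsplit : ∀ (μ : Measure ℝ), IntegrableOn f (Set.Icc 0 t) μ →
            ∀ ε ∈ Set.Ioc (0:ℝ) 1, ε ≤ t →
            (∫ u in Set.Ioc ε t, f u ∂μ)
              = (∫ u in Set.Ioc 0 t, f u ∂μ) - ∫ u in Set.Ioc 0 ε, f u ∂μ := by
          intro μ hi ε hε hεt
          have hdisj : Disjoint (Set.Ioc (0:ℝ) ε) (Set.Ioc ε t) := Set.Ioc_disjoint_Ioc_of_le le_rfl
          have hunion : Set.Ioc (0:ℝ) ε ∪ Set.Ioc ε t = Set.Ioc 0 t :=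
            Set.Ioc_union_Ioc_eq_Ioc hε.1.le hεt
          have h1 : IntegrableOn f (Set.Ioc (0:ℝ) ε) μ :=
            hi.mono_set ((Set.Ioc_subset_Icc_self).trans (Set.Icc_subset_Icc le_rfl hεt))
          have h2 : IntegrableOn f (Set.Ioc ε t) μ :=
            hi.mono_set ((Set.Ioc_subset_Icc_self).trans (Set.Icc_subset_Icc hε.1.le le_rfl))
          have := MeasureTheory.setIntegral_union hdisj measurableSet_Ioc h1 h2 (f := f)
          rw [hunion] at this
          rw [this]
          abel
        -- the integrals over `Ioc 0 ε` tend to zero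
        have hsmall : ∀ μ : Measure ℝ,
            Tendsto (fun ε => (μ (Set.Ioc (0:ℝ) ε)).toReal) (𝓝[Set.Ioc (0:ℝ) 1] 0) (𝓝 0) →
            (∀ ε ∈ Set.Ioc (0:ℝ) 1, μ (Set.Ioc 0 ε) < ⊤) →
            Tendsto (fun ε => ∫ u in Set.Ioc (0:ℝ) ε, f u ∂μ) (𝓝[Set.Ioc (0:ℝ) 1] 0)
              (𝓝 0) := by
          intro μ hμ0 hfin
          have hbound := hμ0.const_mul C
          rw [mul_zero] at hbound
          refine squeeze_zero_norm' ?_ hbound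
          filter_upwards [hmemIoc] with ε hε
          refine MeasureTheory.norm_setIntegral_le_of_norm_le_const_ae' (hfin ε hε) ?_
          exact Eventually.of_forall fun u hu => hC u ⟨hu.1.le, hu.2.trans hε.2⟩
        have hKten : Tendsto (fun ε => (K.measure (Set.Ioc (0:ℝ) ε)).toReal)
            (𝓝[Set.Ioc (0:ℝ) 1] 0) (𝓝 0) := by
          have h1 : Tendsto (fun ε => K ε - K 0) (𝓝[Set.Ioc (0:ℝ) 1] 0) (𝓝 0) := by
            have h2 : Tendsto K (𝓝[Set.Ioc (0:ℝ) 1] 0) (𝓝 (K 0)) :=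
              (K.right_continuous 0).mono_left
                (nhdsWithin_mono _ fun x hx => hx.1.le)
            simpa using h2.sub_const (K 0)
          refine Tendsto.congr' ?_ h1
          filter_upwards [hmemIoc] with ε hε
          rw [StieltjesFunction.measure_Ioc,
            ENNReal.toReal_ofReal (sub_nonneg.2 (K.mono hε.1.le))]
        have hgten : Tendsto (fun ε => (gam.measure (Set.Ioc (0:ℝ) ε)).toReal)
            (𝓝[Set.Ioc (0:ℝ) 1] 0) (𝓝 0) := by
          have h1 : Tendsto (fun ε => gam ε - gam 0) (𝓝[Set.Ioc (0:ℝ) 1] 0) (𝓝 0) := by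
            have h2 : Tendsto gam (𝓝[Set.Ioc (0:ℝ) 1] 0) (𝓝 (gam 0)) :=
              hgam.tendsto.mono_left nhdsWithin_le_nhds
            simpa using h2.sub_const (gam 0)
          refine Tendsto.congr' ?_ h1
          filter_upwards [hmemIoc] with ε hε
          rw [StieltjesFunction.measure_Ioc,
            ENNReal.toReal_ofReal (sub_nonneg.2 (gam.mono hε.1.le))]
        have hfinK : ∀ ε ∈ Set.Ioc (0:ℝ) 1, K.measure (Set.Ioc 0 ε) < ⊤ := fun ε _ => by
          rw [StieltjesFunction.measure_Ioc]; exact ENNReal.ofReal_lt_top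
        have hfing : ∀ ε ∈ Set.Ioc (0:ℝ) 1, gam.measure (Set.Ioc 0 ε) < ⊤ := fun ε _ => by
          rw [StieltjesFunction.measure_Ioc]; exact ENNReal.ofReal_lt_top
        have hKlim := hsmall K.measure hKten hfinK
        have hglim := hsmall gam.measure hgten hfing
        -- limit of the exponential term
        have hexp : Tendsto (fun ε => expA (lam t - lam ε) (Z ε)) (𝓝[Set.Ioc (0:ℝ) 1] 0)
            (𝓝 (expA (lam t - lam 0) (Z 0))) := by
          have hl : Tendsto lam (𝓝[Set.Icc (0:ℝ) 1] 0) (𝓝 (lam 0)) :=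
            hlam 0 ⟨le_rfl, zero_le_one⟩
          have hl' : Tendsto (fun ε => lam t - lam ε) (𝓝[Set.Ioc (0:ℝ) 1] 0)
              (𝓝 (lam t - lam 0)) := tendsto_const_nhds.sub (hl.mono_left hfle)
          have hcosh : Tendsto (fun ε => Real.cosh (lam t - lam ε)) (𝓝[Set.Ioc (0:ℝ) 1] 0)
              (𝓝 (Real.cosh (lam t - lam 0))) := (Real.continuous_cosh.tendsto _).comp hl'
          have hsinh : Tendsto (fun ε => Real.sinh (lam t - lam ε)) (𝓝[Set.Ioc (0:ℝ) 1] 0)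
              (𝓝 (Real.sinh (lam t - lam 0))) := (Real.continuous_sinh.tendsto _).comp hl'
          have hZ1 : Tendsto (fun ε => (Z ε).1) (𝓝[Set.Ioc (0:ℝ) 1] 0) (𝓝 (Z 0).1) :=
            (continuous_fst.tendsto _).comp hZ0
          have hZ2 : Tendsto (fun ε => (Z ε).2) (𝓝[Set.Ioc (0:ℝ) 1] 0) (𝓝 (Z 0).2) :=
            (continuous_snd.tendsto _).comp hZ0
          simp only [expA]
          exact Tendsto.prodMk_nhds ((hcosh.mul hZ1).add (hsinh.mul hZ2))
            ((hsinh.mul hZ1).add (hcosh.mul hZ2))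
        -- the approximating function and its limit
        set G : ℝ → ℝ × ℝ := fun ε => expA (lam t - lam ε) (Z ε)
          + ((∫ u in Set.Ioc (0:ℝ) t, f u ∂K.measure) - ∫ u in Set.Ioc (0:ℝ) ε, f u ∂K.measure)
          - ((∫ u in Set.Ioc (0:ℝ) t, f u ∂gam.measure)
              - ∫ u in Set.Ioc (0:ℝ) ε, f u ∂gam.measure) with hG
        have hGlim : Tendsto G (𝓝[Set.Ioc (0:ℝ) 1] 0)
            (𝓝 (expA (lam t - lam 0) (Z 0)
              + ((∫ u in Set.Ioc (0:ℝ) t, f u ∂K.measure) - 0)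
              - ((∫ u in Set.Ioc (0:ℝ) t, f u ∂gam.measure) - 0))) :=
          (hexp.add (tendsto_const_nhds.sub hKlim)).sub (tendsto_const_nhds.sub hglim)
        have hGZ : G =ᶠ[𝓝[Set.Ioc (0:ℝ) 1] 0] fun _ => Z t := by
          filter_upwards [hmemIoc, mem_nhdsWithin_of_mem_nhds (Iio_mem_nhds ht0)]
            with ε hε hεt
          have h1 := heq ε hε t ⟨ht0, ht.2⟩ (le_of_lt hεt)
          rw [← hf] at h1
          rw [hG]
          dsimp only
          rw [← hsplit K.measure hKi ε hε hεt.le, ← hsplit gam.measure hgi ε hε hεt.le]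
          exact h1.symm
        have hfinal := tendsto_nhds_unique (hGlim.congr' hGZ) tendsto_const_nhds
        rw [hKint f 0 t le_rfl, ← hfinal, sub_zero, sub_zero]

    · -- s > 0 : use the equation on `(0,1]` directly
      rw [hKint (fun u => expA (lam t - lam u) (1, 0)) s t hs.1]
      exact heq s ⟨h0, hs.2⟩ t ⟨h0.trans_le hst, ht.2⟩ hst
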